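/- Let t > 0 and let 0 < ε < t. Then the link of the Cartan umbrella at the point (0,0,t), namely the set {(x,y,z) ∈ ℝ³ | x² = z·y² ∧ x² + y² + (z−t)² = ε²} with its subspace topology, is homeomorphic to the subspace G = {(a,b) ∈ ℝ² | a² + b² = 1 ∨ a²/4 + b² = 1} of ℝ² (the union of the unit circle and an ellipse meeting exactly at the two points (0,1) and (0,−1); topologically, a graph with two vertices and four edges joining one vertex to the other). -/

import Mathlib

private lemma cartan_zpos (t ε x y z : ℝ) (hε : 0 < ε) (hεt : ε < t)
    (h : x ^ 2 + y ^ 2 + (z - t) ^ 2 = ε ^ 2) : 0 < z := by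
  nlinarith [sq_nonneg x, sq_nonneg y, sq_nonneg (z - t + ε)]

private lemma cartan_cases (x y z : ℝ) (hz : 0 < z) (h1 : x ^ 2 = z * y ^ 2) :
    x = Real.sqrt z * y ∨ x = -(Real.sqrt z * y) := by
  have hs : Real.sqrt z ^ 2 = z := Real.sq_sqrt hz.le
  have h : (x - Real.sqrt z * y) * (x + Real.sqrt z * y) = 0 := by
    linear_combination h1 - y ^ 2 * hs
  rcases mul_eq_zero.mp h with h | h
  · left; linarith
  · right; linarith

private lemma cartan_inj (t ε x y x' y' z : ℝ) (hz : 0 < z)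
    (h1 : x ^ 2 = z * y ^ 2) (h2 : x ^ 2 + y ^ 2 + (z - t) ^ 2 = ε ^ 2)
    (h1' : x' ^ 2 = z * y' ^ 2) (h2' : x' ^ 2 + y' ^ 2 + (z - t) ^ 2 = ε ^ 2)
    (ha : 3 * y - x / Real.sqrt z = 3 * y' - x' / Real.sqrt z) :
    y = y' ∧ x = x' := by
  have hsne : Real.sqrt z ≠ 0 := ne_of_gt (Real.sqrt_pos.mpr hz)
  have hdiv : ∀ w : ℝ, Real.sqrt z * w / Real.sqrt z = w := by
    intro w; rw [mul_comm, mul_div_assoc, div_self hsne, mul_one]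
  have h3 : (z + 1) * y ^ 2 = (z + 1) * y' ^ 2 := by
    linear_combination h2 - h2' - h1 + h1'
  have hyy : y ^ 2 = y' ^ 2 :=
    mul_left_cancel₀ (by linarith : (z : ℝ) + 1 ≠ 0) h3
  have hyy' : y = y' := by
    rcases cartan_cases x y z hz h1 with hx | hx <;>
      rcases cartan_cases x' y' z hz h1' with hx' | hx' <;>
      · rw [hx, hx'] at ha
        simp only [neg_div, hdiv] at ha
        nlinarith [hyy, ha]
  refine ⟨hyy', ?_⟩
  rcases cartan_cases x y z hz h1 with hx | hx
  · rcases cartan_cases x' y' z hz h1' with hx' | hx'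
    · rw [hx, hx', hyy']
    · rw [hx, hx'] at ha
      simp only [neg_div, hdiv] at ha
      have hy0 : y = 0 := by nlinarith [hyy', ha]
      rw [hx, hx', hy0, ← hyy', hy0]; ring
  · rcases cartan_cases x' y' z hz h1' with hx' | hx'
    · rw [hx, hx'] at ha
      simp only [neg_div, hdiv] at ha
      have hy0 : y = 0 := by nlinarith [hyy', ha]
      rw [hx, hx', hy0, ← hyy', hy0]; ring
    · rw [hx, hx', hyy']

/-- For `t > 0` and `0 < ε < t`, the link of the Cartan umbrella at `(0,0,t)`
is homeomorphic to the union of the unit circle and the ellipse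
`a²/4 + b² = 1` in `ℝ²` (a graph with two vertices and four edges). -/
theorem stmt_7 (t ε : ℝ) (ht : 0 < t) (hε : 0 < ε) (hεt : ε < t) :
    Nonempty
      (({p : ℝ × ℝ × ℝ | p.1 ^ 2 = p.2.2 * p.2.1 ^ 2 ∧
          p.1 ^ 2 + p.2.1 ^ 2 + (p.2.2 - t) ^ 2 = ε ^ 2} : Set (ℝ × ℝ × ℝ)) ≃ₜ
        ({q : ℝ × ℝ | q.1 ^ 2 + q.2 ^ 2 = 1 ∨
          q.1 ^ 2 / 4 + q.2 ^ 2 = 1} : Set (ℝ × ℝ))) := by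
  have hεne : ε ≠ 0 := ne_of_gt hε
  set L : Set (ℝ × ℝ × ℝ) := {p : ℝ × ℝ × ℝ | p.1 ^ 2 = p.2.2 * p.2.1 ^ 2 ∧
      p.1 ^ 2 + p.2.1 ^ 2 + (p.2.2 - t) ^ 2 = ε ^ 2} with hLdef
  set G : Set (ℝ × ℝ) := {q : ℝ × ℝ | q.1 ^ 2 + q.2 ^ 2 = 1 ∨
      q.1 ^ 2 / 4 + q.2 ^ 2 = 1} with hGdef
  -- the forward map
  have hmem : ∀ p : ℝ × ℝ × ℝ, p ∈ L →
      (Real.sqrt (p.2.2 + 1) * (3 * p.2.1 - p.1 / Real.sqrt p.2.2) / (2 * ε),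
        (p.2.2 - t) / ε) ∈ G := by
    rintro ⟨x, y, z⟩ ⟨h1, h2⟩
    have h1' : x ^ 2 = z * y ^ 2 := h1
    have h2' : x ^ 2 + y ^ 2 + (z - t) ^ 2 = ε ^ 2 := h2
    have hz : 0 < z := cartan_zpos t ε x y z hε hεt h2'
    have hsne : Real.sqrt z ≠ 0 := ne_of_gt (Real.sqrt_pos.mpr hz)
    have hc : Real.sqrt (z + 1) ^ 2 = z + 1 := Real.sq_sqrt (by linarith)
    have key : (z + 1) * y ^ 2 + (z - t) ^ 2 = ε ^ 2 := by
      linear_combination h2' - h1'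
    rcases cartan_cases x y z hz h1' with hx | hx
    · left
      have hdiv : Real.sqrt z * y / Real.sqrt z = y := by
        rw [mul_comm, mul_div_assoc, div_self hsne, mul_one]
      have hxy : x / Real.sqrt z = y := by rw [hx, hdiv]
      show (Real.sqrt (z + 1) * (3 * y - x / Real.sqrt z) / (2 * ε)) ^ 2
          + ((z - t) / ε) ^ 2 = 1
      rw [hxy]
      have e1 : (Real.sqrt (z + 1) * (3 * y - y) / (2 * ε)) ^ 2 + ((z - t) / ε) ^ 2
          = (Real.sqrt (z + 1) ^ 2 * y ^ 2 + (z - t) ^ 2) / ε ^ 2 := by ring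
      rw [e1, hc, key]
      exact div_self (by positivity)
    · right
      have hdiv : Real.sqrt z * y / Real.sqrt z = y := by
        rw [mul_comm, mul_div_assoc, div_self hsne, mul_one]
      have hxy : x / Real.sqrt z = -y := by rw [hx, neg_div, hdiv]
      show (Real.sqrt (z + 1) * (3 * y - x / Real.sqrt z) / (2 * ε)) ^ 2 / 4
          + ((z - t) / ε) ^ 2 = 1
      rw [hxy]
      have e1 : (Real.sqrt (z + 1) * (3 * y - -y) / (2 * ε)) ^ 2 / 4 + ((z - t) / ε) ^ 2
          = (Real.sqrt (z + 1) ^ 2 * y ^ 2 + (z - t) ^ 2) / ε ^ 2 := by ring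
      rw [e1, hc, key]
      exact div_self (by positivity)
  let F : L → G := fun p =>
    ⟨(Real.sqrt (p.1.2.2 + 1) * (3 * p.1.2.1 - p.1.1 / Real.sqrt p.1.2.2) / (2 * ε),
      (p.1.2.2 - t) / ε), hmem p.1 p.2⟩
  -- injectivity
  have hinj : Function.Injective F := by
    rintro ⟨⟨x, y, z⟩, h1, h2⟩ ⟨⟨x', y', z'⟩, h1', h2'⟩ hFeq
    have heq := Subtype.ext_iff.mp hFeq
    have hb : (z - t) / ε = (z' - t) / ε := congrArg Prod.snd heq
    have hzz : z = z' := by field_simp at hb; linarith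
    subst hzz
    have hz : 0 < z := cartan_zpos t ε x y z hε hεt h2
    have hsne : Real.sqrt z ≠ 0 := ne_of_gt (Real.sqrt_pos.mpr hz)
    have hcpos : 0 < Real.sqrt (z + 1) := Real.sqrt_pos.mpr (by linarith)
    have ha : Real.sqrt (z + 1) * (3 * y - x / Real.sqrt z) / (2 * ε) =
        Real.sqrt (z + 1) * (3 * y' - x' / Real.sqrt z) / (2 * ε) := congrArg Prod.fst heq
    have h2ε : (2 : ℝ) * ε ≠ 0 := by positivity
    have ha' : 3 * y - x / Real.sqrt z = 3 * y' - x' / Real.sqrt z := by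
      rw [div_eq_div_iff h2ε h2ε] at ha
      exact mul_left_cancel₀ (ne_of_gt hcpos) (mul_right_cancel₀ h2ε ha)
    obtain ⟨hyy', hxx⟩ := cartan_inj t ε x y x' y' z hz h1 h2 h1' h2' ha'
    exact Subtype.ext (by show (x, y, z) = (x', y', z); rw [hxx, hyy'])
  -- surjectivity
  have hsurj : Function.Surjective F := by
    rintro ⟨⟨a, b⟩, hq⟩
    have hb2 : b ^ 2 ≤ 1 := by rcases hq with h | h <;> nlinarith [sq_nonneg a]
    have hb1 : -1 ≤ b := by nlinarith
    have hzpos : 0 < t + ε * b := by nlinarith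
    have hz1 : 0 < t + ε * b + 1 := by linarith
    set z := t + ε * b with hzdef
    set c := Real.sqrt (z + 1) with hcdef
    have hc2 : c ^ 2 = z + 1 := Real.sq_sqrt (by positivity)
    have hcne : c ≠ 0 := ne_of_gt (Real.sqrt_pos.mpr (by positivity))
    have hs2 : Real.sqrt z ^ 2 = z := Real.sq_sqrt hzpos.le
    have hsne : Real.sqrt z ≠ 0 := ne_of_gt (Real.sqrt_pos.mpr hzpos)
    have hdiv : ∀ w : ℝ, Real.sqrt z * w / Real.sqrt z = w := fun w => by
      rw [mul_comm, mul_div_assoc, div_self hsne, mul_one]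
    rcases hq with h | h
    · -- circle: y = ε a / c, x = √z y
      refine ⟨⟨(Real.sqrt z * (ε * a / c), ε * a / c, z), ?_, ?_⟩, ?_⟩
      · show (Real.sqrt z * (ε * a / c)) ^ 2 = z * (ε * a / c) ^ 2
        rw [mul_pow, hs2]
      · show (Real.sqrt z * (ε * a / c)) ^ 2 + (ε * a / c) ^ 2 + (z - t) ^ 2 = ε ^ 2
        have : z - t = ε * b := by rw [hzdef]; ring
        rw [mul_pow, hs2, this]
        have h' : a ^ 2 + b ^ 2 = 1 := h
        have hc' : (z + 1) * (ε * a / c) ^ 2 = ε ^ 2 * a ^ 2 := by rw [← hc2]; field_simp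
        linear_combination hc' + ε ^ 2 * h'
      · apply Subtype.ext
        show (c * (3 * (ε * a / c) - Real.sqrt z * (ε * a / c) / Real.sqrt z) / (2 * ε),
          (z - t) / ε) = (a, b)
        have hxy : Real.sqrt z * (ε * a / c) / Real.sqrt z = ε * a / c := hdiv _
        rw [hxy]
        have hzt : (z - t) / ε = b := by rw [hzdef]; field_simp; ring
        rw [hzt]
        congr 1
        field_simp
        ring
    · -- ellipse: y = ε a / (2c), x = -√z y
      refine ⟨⟨(-(Real.sqrt z * (ε * a / (2 * c))), ε * a / (2 * c), z), ?_, ?_⟩, ?_⟩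
      · show (-(Real.sqrt z * (ε * a / (2 * c)))) ^ 2 = z * (ε * a / (2 * c)) ^ 2
        rw [neg_pow, mul_pow, hs2]; ring
      · show (-(Real.sqrt z * (ε * a / (2 * c)))) ^ 2 + (ε * a / (2 * c)) ^ 2
            + (z - t) ^ 2 = ε ^ 2
        have : z - t = ε * b := by rw [hzdef]; ring
        rw [neg_pow, mul_pow, hs2, this]
        have h' : a ^ 2 / 4 + b ^ 2 = 1 := h
        have hc' : (z + 1) * (ε * a / (2 * c)) ^ 2 = ε ^ 2 * a ^ 2 / 4 := by
          rw [← hc2]; field_simp; ring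
        linear_combination hc' + ε ^ 2 * h'
      · apply Subtype.ext
        show (c * (3 * (ε * a / (2 * c)) -
            -(Real.sqrt z * (ε * a / (2 * c))) / Real.sqrt z) / (2 * ε),
          (z - t) / ε) = (a, b)
        have hxy : -(Real.sqrt z * (ε * a / (2 * c))) / Real.sqrt z
            = -(ε * a / (2 * c)) := by rw [neg_div, hdiv]
        rw [hxy]
        have hzt : (z - t) / ε = b := by rw [hzdef]; field_simp; ring
        rw [hzt]
        congr 1
        field_simp
        ring
  -- continuity
  have hcont : Continuous F := by
    apply Continuous.subtype_mk
    have hx : Continuous fun p : L => p.1.1 :=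
      continuous_fst.comp continuous_subtype_val
    have hy : Continuous fun p : L => p.1.2.1 :=
      continuous_fst.comp (continuous_snd.comp continuous_subtype_val)
    have hz : Continuous fun p : L => p.1.2.2 :=
      continuous_snd.comp (continuous_snd.comp continuous_subtype_val)
    have hzne : ∀ p : L, Real.sqrt p.1.2.2 ≠ 0 := by
      rintro ⟨⟨x, y, z⟩, h1, h2⟩
      exact ne_of_gt (Real.sqrt_pos.mpr (cartan_zpos t ε x y z hε hεt h2))
    apply Continuous.prodMk
    · exact ((Real.continuous_sqrt.comp (hz.add continuous_const)).mul
        (((continuous_const.mul hy).sub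
          (hx.div (Real.continuous_sqrt.comp hz) hzne)))).div_const _
    · exact (hz.sub continuous_const).div_const _
  -- compactness of L
  have hLcompact : IsCompact L := by
    apply Metric.isCompact_of_isClosed_isBounded
    · have : L = {p : ℝ × ℝ × ℝ | p.1 ^ 2 = p.2.2 * p.2.1 ^ 2} ∩
          {p : ℝ × ℝ × ℝ | p.1 ^ 2 + p.2.1 ^ 2 + (p.2.2 - t) ^ 2 = ε ^ 2} := rfl
      rw [this]
      exact (isClosed_eq (by fun_prop) (by fun_prop)).inter
        (isClosed_eq (by fun_prop) continuous_const)
    · apply (Metric.isBounded_closedBall (x := ((0 : ℝ), (0 : ℝ), t)) (r := ε)).subset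
      rintro ⟨x, y, z⟩ ⟨h1, h2⟩
      simp only [Metric.mem_closedBall, Prod.dist_eq, Real.dist_eq, max_le_iff]
      refine ⟨?_, ?_, ?_⟩ <;> rw [abs_le] <;> constructor <;>
        nlinarith [sq_nonneg x, sq_nonneg y, sq_nonneg (z - t)]
  haveI : CompactSpace L := isCompact_iff_compactSpace.mp hLcompact
  exact ⟨Continuous.homeoOfEquivCompactToT2 (f := Equiv.ofBijective F ⟨hinj, hsurj⟩) hcont⟩
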